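/- arXiv:2106.00519 — 2 statements merged into one kernel-verified Lean document; each statement's English description precedes it below -/
import Mathlib

section
/- Let F : ℝ^n ⇒ ℝ^n and let (x, y) ∈ gph F. Then every L ∈ Sp* F(x, y) is contained in the graph of the limiting coderivative of F at (x, y): for every (y*, x*) ∈ L there exist sequences (x_k, y_k) ∈ gph F with (x_k, y_k) → (x, y) and vectors (u_k*, v_k*) ∈ ℝ^{2n} with (u_k*, v_k*) → (x*, −y*) such that for every k, ⟨(u_k*, v_k*), w⟩ ≤ 0 for all w ∈ T_{gph F}(x_k, y_k). -/
open Filter Topology Metric Set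
open scoped InnerProductSpace RealInnerProductSpace ENNReal NNReal

noncomputable section

namespace SCD

abbrev E (n : ℕ) := EuclideanSpace ℝ (Fin n)
abbrev E2 (n : ℕ) := WithLp 2 (E n × E n)

variable {n : ℕ}

def lp2 (n : ℕ) : E2 n ≃ₗ[ℝ] E n × E n := WithLp.linearEquiv 2 ℝ (E n × E n)
def mk2 (u v : E n) : E2 n := (lp2 n).symm (u, v)
def fst2 (z : E2 n) : E n := (lp2 n z).1
def snd2 (z : E2 n) : E n := (lp2 n z).2

instance : FiniteDimensional ℝ (E2 n) := Module.Finite.equiv (lp2 n).symm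

def tcone {H : Type*} [NormedAddCommGroup H] [NormedSpace ℝ H] (A : Set H) (z : H) : Set H :=
  {w | ∃ t : ℕ → ℝ, ∃ wk : ℕ → H, (∀ k, 0 < t k) ∧ Tendsto t atTop (𝓝 0) ∧
      Tendsto wk atTop (𝓝 w) ∧ ∀ k, z + t k • wk k ∈ A}

def gph (F : E n → Set (E n)) : Set (E2 n) := {z | snd2 z ∈ F (fst2 z)}
def projC (L : Submodule ℝ (E2 n)) : E2 n →L[ℝ] E2 n := L.subtypeL.comp (L.orthogonalProjectionOnto)
def dZ (L₁ L₂ : Submodule ℝ (E2 n)) : ℝ := ‖projC L₁ - projC L₂‖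

def Sneg (n : ℕ) : E2 n ≃ₗ[ℝ] E2 n :=
  (lp2 n).trans (((LinearEquiv.prodComm ℝ (E n) (E n)).trans
    ((LinearEquiv.neg ℝ).prodCongr (LinearEquiv.refl ℝ (E n)))).trans (lp2 n).symm)

def adjS (L : Submodule ℝ (E2 n)) : Submodule ℝ (E2 n) := Lᗮ.map (Sneg n).toLinearMap

/-- `O_F`: the set of points of `gph F` where `F` is graphically smooth of dimension `n`,
i.e. the tangent cone to the graph is an `n`-dimensional linear subspace. -/
def OF (F : E n → Set (E n)) : Set (E2 n) :=
  {z | z ∈ gph F ∧ ∃ L : Submodule ℝ (E2 n),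
    Module.finrank ℝ L = n ∧ (L : Set (E2 n)) = tcone (gph F) z}

/-- The primal generalized derivative `Sp F(x,y)`. -/
def Sp (F : E n → Set (E n)) (z : E2 n) : Set (Submodule ℝ (E2 n)) :=
  {L | Module.finrank ℝ L = n ∧ ∃ (zk : ℕ → E2 n) (Lk : ℕ → Submodule ℝ (E2 n)),
      (∀ k, zk k ∈ gph F ∧ Module.finrank ℝ (Lk k) = n ∧
        ((Lk k : Set (E2 n)) = tcone (gph F) (zk k))) ∧
      Tendsto zk atTop (𝓝 z) ∧ Tendsto (fun k => dZ (Lk k) L) atTop (𝓝 0)}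

/-- The dual generalized derivative `Sp* F(x,y)`. -/
def SpStar (F : E n → Set (E n)) (z : E2 n) : Set (Submodule ℝ (E2 n)) :=
  {L' | ∃ L ∈ Sp F z, L' = adjS L}

/-- `F` has the SCD property at `z ∈ gph F`. -/
def SCDAt (F : E n → Set (E n)) (z : E2 n) : Prop := (Sp F z).Nonempty

/-- `F` has the SCD property around `z ∈ gph F`. -/
def SCDAround (F : E n → Set (E n)) (z : E2 n) : Prop :=
  ∃ δ > (0 : ℝ), ∀ z' ∈ gph F, dist z' z < δ → SCDAt F z'

/-- `Z_n^{reg}`: the subspaces `L ∈ Z_n` such that `(y*, 0) ∈ L` implies `y* = 0`. -/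
def Znreg (n : ℕ) : Set (Submodule ℝ (E2 n)) :=
  {L | Module.finrank ℝ L = n ∧ ∀ y : E n, mk2 y 0 ∈ L → y = 0}

/-- `F` is SCD regular around `z ∈ gph F`. -/
def SCDRegularAround (F : E n → Set (E n)) (z : E2 n) : Prop :=
  SCDAround F z ∧ ∀ L ∈ SpStar F z, L ∈ Znreg n

/-- The set of values `‖y*‖` for `(y*, x*)` in some `L ∈ Sp* F(x,y)` with `‖x*‖ ≤ 1`;
its supremum is the modulus of SCD regularity. -/
def scdregSet (F : E n → Set (E n)) (z : E2 n) : Set ℝ :=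
  {r | ∃ L ∈ SpStar F z, ∃ w : E2 n, w ∈ L ∧ ‖snd2 w‖ ≤ 1 ∧ r = ‖fst2 w‖}

/-- The modulus of SCD regularity `scd reg F(x,y)`. -/
def scdreg (F : E n → Set (E n)) (z : E2 n) : ℝ := sSup (scdregSet F z)

/-- The graph of the outer limiting graphical derivative `D^♯F(x̄,ȳ)`. -/
def DsharpG (F : E n → Set (E n)) (z : E2 n) : Set (E2 n) :=
  {w | ∃ (zk : ℕ → E2 n) (wk : ℕ → E2 n),
    (∀ k, zk k ∈ gph F ∧ wk k ∈ tcone (gph F) (zk k)) ∧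
    Tendsto zk atTop (𝓝 z) ∧ Tendsto wk atTop (𝓝 w)}

/-- The regular (Fréchet) normal cone: the polar of the tangent cone. -/
def regN (A : Set (E2 n)) (z : E2 n) : Set (E2 n) := {w | ∀ v ∈ tcone A z, ⟪w, v⟫_ℝ ≤ 0}

/-- The limiting (Mordukhovich) normal cone. -/
def limN (A : Set (E2 n)) (z : E2 n) : Set (E2 n) :=
  {w | ∃ (zk wk : ℕ → E2 n), (∀ k, zk k ∈ A ∧ wk k ∈ regN A (zk k)) ∧
    Tendsto zk atTop (𝓝 z) ∧ Tendsto wk atTop (𝓝 w)}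

/-- The graph of the limiting coderivative: `(y*, x*)` with `(x*, -y*)` in the limiting
normal cone to the graph. -/
def coderivG (F : E n → Set (E n)) (z : E2 n) : Set (E2 n) :=
  {w | mk2 (snd2 w) (-(fst2 w)) ∈ limN (gph F) z}

/-- The graph of the strict (paratingent) derivative `D_*F(x̄,ȳ)`. -/
def paraconeG (F : E n → Set (E n)) (z : E2 n) : Set (E2 n) :=
  {w | ∃ (t : ℕ → ℝ) (z1 z2 : ℕ → E2 n), (∀ k, 0 < t k) ∧ Tendsto t atTop (𝓝 0) ∧
    (∀ k, z1 k ∈ gph F ∧ z2 k ∈ gph F) ∧ Tendsto z1 atTop (𝓝 z) ∧ Tendsto z2 atTop (𝓝 z) ∧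
    Tendsto (fun k => (t k)⁻¹ • (z2 k - z1 k)) atTop (𝓝 w)}

/-- The B-subdifferential of `f : U → ℝ^n` at `x`. -/
def Bsub (f : E n → E n) (U : Set (E n)) (x : E n) : Set (E n →L[ℝ] E n) :=
  {A | ∃ xk : ℕ → E n, (∀ k, xk k ∈ U ∧ DifferentiableAt ℝ f (xk k)) ∧
    Tendsto xk atTop (𝓝 x) ∧ Tendsto (fun k => fderiv ℝ f (xk k)) atTop (𝓝 A)}

/-- A single-valued map `f` on `U` viewed as a set-valued map. -/
def sv (f : E n → E n) (U : Set (E n)) : E n → Set (E n) := fun x => {y | x ∈ U ∧ y = f x}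

/-- The linear map `u ↦ (u, A u)`. -/
def graphMap (A : E n →L[ℝ] E n) : E n →ₗ[ℝ] E2 n :=
  (lp2 n).symm.toLinearMap.comp (LinearMap.prod LinearMap.id A.toLinearMap)

/-- The subspace `rge(I, A) = {(u, Au) : u ∈ ℝ^n}`. -/
def rgeIA (A : E n →L[ℝ] E n) : Submodule ℝ (E2 n) := LinearMap.range (graphMap A)

/-- The linear map `p ↦ (C p, p)`. -/
def graphMapRev (C : E n →L[ℝ] E n) : E n →ₗ[ℝ] E2 n :=
  (lp2 n).symm.toLinearMap.comp (LinearMap.prod C.toLinearMap LinearMap.id)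

/-- The subspace `rge(C, I) = {(C p, p) : p ∈ ℝ^n}`. -/
def rgeCI (C : E n →L[ℝ] E n) : Submodule ℝ (E2 n) := LinearMap.range (graphMapRev C)

/-- The preimage map `F^{-1}(y)`. -/
def Finv (F : E n → Set (E n)) (y : E n) : Set (E n) := {x | y ∈ F x}

/-- Metric subregularity at `z ∈ gph F` with constant `κ`. -/
def SubregWith (F : E n → Set (E n)) (z : E2 n) (κ : ℝ) : Prop :=
  ∃ δ > (0 : ℝ), ∀ x' : E n, dist x' (fst2 z) < δ →
    EMetric.infEdist x' (Finv F (snd2 z)) ≤ ENNReal.ofReal κ * EMetric.infEdist (snd2 z) (F x')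

/-- `F` is metrically subregular at `z ∈ gph F`. -/
def SubregAt (F : E n → Set (E n)) (z : E2 n) : Prop := ∃ κ, 0 ≤ κ ∧ SubregWith F z κ

/-- The modulus of metric subregularity `subreg F(x,y)`. -/
def subregMod (F : E n → Set (E n)) (z : E2 n) : ℝ := sInf {κ | 0 ≤ κ ∧ SubregWith F z κ}

/-- `F` is strongly metrically subregular at `z ∈ gph F`. -/
def StrSubregAt (F : E n → Set (E n)) (z : E2 n) : Prop :=
  SubregAt F z ∧ ∃ δ > (0 : ℝ), ∀ x' ∈ Finv F (snd2 z), dist x' (fst2 z) < δ → x' = fst2 z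

/-- `F` is strongly metrically subregular around `zb ∈ gph F` (with finite `lsubreg`). -/
def StrSubregAround (F : E n → Set (E n)) (zb : E2 n) : Prop :=
  ∃ δ > (0 : ℝ), (∀ z ∈ gph F, dist z zb < δ → StrSubregAt F z) ∧
    ∃ c : ℝ, ∀ z ∈ gph F, dist z zb < δ → subregMod F z ≤ c

/-- `lsubreg F(x̄,ȳ)`: the limsup of `subreg F(x,y)` over graph points `(x,y) → (x̄,ȳ)`. -/
def lsubreg (F : E n → Set (E n)) (zb : E2 n) : ℝ :=
  Filter.limsup (fun z => subregMod F z) (𝓝[gph F] zb)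

/-- Metric regularity around `zb ∈ gph F` with constant `κ`. -/
def RegWith (F : E n → Set (E n)) (zb : E2 n) (κ : ℝ) : Prop :=
  ∃ δ > (0 : ℝ), ∀ x y : E n, dist x (fst2 zb) < δ → dist y (snd2 zb) < δ →
    EMetric.infEdist x (Finv F y) ≤ ENNReal.ofReal κ * EMetric.infEdist y (F x)

/-- `F` is metrically regular around `zb ∈ gph F`. -/
def MetrRegAround (F : E n → Set (E n)) (zb : E2 n) : Prop := ∃ κ, 0 ≤ κ ∧ RegWith F zb κ

/-- The modulus of metric regularity `reg F(x̄,ȳ)`. -/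
def regMod (F : E n → Set (E n)) (zb : E2 n) : ℝ := sInf {κ | 0 ≤ κ ∧ RegWith F zb κ}

/-- `F` is strongly metrically regular around `zb ∈ gph F`: metrically regular and `F⁻¹`
has a single-valued localization around `(ȳ, x̄)`. -/
def StrRegAround (F : E n → Set (E n)) (zb : E2 n) : Prop :=
  MetrRegAround F zb ∧
  ∃ (X' Y' : Set (E n)) (h : E n → E n), IsOpen X' ∧ IsOpen Y' ∧
    fst2 zb ∈ X' ∧ snd2 zb ∈ Y' ∧ h (snd2 zb) = fst2 zb ∧
    gph F ∩ {w | fst2 w ∈ X' ∧ snd2 w ∈ Y'} = {w | snd2 w ∈ Y' ∧ fst2 w = h (snd2 w)}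

/-- `F` is SCD semismooth* at `zb ∈ gph F`. -/
def SCDSemismoothAt (F : E n → Set (E n)) (zb : E2 n) : Prop :=
  SCDAround F zb ∧ ∀ ε > (0 : ℝ), ∃ δ > (0 : ℝ), ∀ z ∈ gph F, dist z zb ≤ δ →
    ∀ L ∈ SpStar F z, ∀ w : E2 n, w ∈ L →
      |⟪snd2 w, fst2 z - fst2 zb⟫_ℝ - ⟪fst2 w, snd2 z - snd2 zb⟫_ℝ| ≤ ε * ‖z - zb‖ * ‖w‖

/-- `F` is graphically Lipschitzian of dimension `n` at `zb` with transformation mapping `Φ`,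
local inverse `Ψ`, neighborhood `W`, and `K`-Lipschitz map `f : U → ℝ^n`. -/
def GraphLipWith (F : E n → Set (E n)) (zb : E2 n) (Φ Ψ : E2 n → E2 n)
    (W : Set (E2 n)) (U : Set (E n)) (f : E n → E n) (K : ℝ≥0) : Prop :=
  IsOpen W ∧ zb ∈ W ∧ ContDiffOn ℝ 1 Φ W ∧ Set.InjOn Φ W ∧ IsOpen (Φ '' W) ∧
  ContDiffOn ℝ 1 Ψ (Φ '' W) ∧ Set.LeftInvOn Ψ Φ W ∧
  IsOpen U ∧ LipschitzOnWith K f U ∧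
  Φ '' (gph F ∩ W) = {w | fst2 w ∈ U ∧ snd2 w = f (fst2 w)}

/-- `F` is graphically Lipschitzian of dimension `n` at `zb` with transformation mapping `Φ`. -/
def GraphLipAt (F : E n → Set (E n)) (zb : E2 n) (Φ : E2 n → E2 n) : Prop :=
  ∃ Ψ W U f K, GraphLipWith F zb Φ Ψ W U f K

/-- `∇̄^Φ F(x̄,ȳ)`: the `(2n)×n` matrices `Z` (as linear maps `ℝ^n → ℝ^{2n}`) with
`rge Z ∈ Sp F(x̄,ȳ)` and upper block of `∇Φ(x̄,ȳ)Z` equal to the identity. -/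
def BsubPhi (F : E n → Set (E n)) (zb : E2 n) (Φ : E2 n → E2 n) : Set (E n →L[ℝ] E2 n) :=
  {Z | LinearMap.range (Z : E n →ₗ[ℝ] E2 n) ∈ Sp F zb ∧ ∀ p, fst2 (fderiv ℝ Φ zb (Z p)) = p}

/-- A (globally) monotone set-valued map. -/
def MonoMap (T : E n → Set (E n)) : Prop :=
  ∀ x₁ y₁ x₂ y₂, y₁ ∈ T x₁ → y₂ ∈ T x₂ → 0 ≤ ⟪y₁ - y₂, x₁ - x₂⟫_ℝ

/-- `F` is locally maximally monotone at `z ∈ gph F`. -/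
def LocMaxMonoAt (F : E n → Set (E n)) (z : E2 n) : Prop :=
  ∃ X Y : Set (E n), IsOpen X ∧ IsOpen Y ∧ fst2 z ∈ X ∧ snd2 z ∈ Y ∧
    (∀ w₁ ∈ gph F ∩ {w | fst2 w ∈ X ∧ snd2 w ∈ Y},
     ∀ w₂ ∈ gph F ∩ {w | fst2 w ∈ X ∧ snd2 w ∈ Y},
       0 ≤ ⟪snd2 w₁ - snd2 w₂, fst2 w₁ - fst2 w₂⟫_ℝ) ∧
    ∀ T : E n → Set (E n), MonoMap T →
      gph F ∩ {w | fst2 w ∈ X ∧ snd2 w ∈ Y} ⊆ gph T →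
      gph F ∩ {w | fst2 w ∈ X ∧ snd2 w ∈ Y} = gph T ∩ {w | fst2 w ∈ X ∧ snd2 w ∈ Y}

/-- `F` is locally maximally hypomonotone at `z ∈ gph F`:
`γI + F` is locally maximally monotone at `(x, γx + y)` for some `γ ≥ 0`. -/
def LocMaxHypoAt (F : E n → Set (E n)) (z : E2 n) : Prop :=
  ∃ γ : ℝ, 0 ≤ γ ∧ LocMaxMonoAt (fun x => (fun y => γ • x + y) '' F x)
    (mk2 (fst2 z) (γ • fst2 z + snd2 z))

/-- A firmly nonexpansive matrix: `⟨Bv, v⟩ ≥ ‖Bv‖²` for all `v`. -/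
def FirmNonexp (B : E n →L[ℝ] E n) : Prop := ∀ v, ‖B v‖ ^ 2 ≤ ⟪B v, v⟫_ℝ


/- STATEMENT 5 -/
theorem stmt5 (n : ℕ) (F : E n → Set (E n)) (z : E2 n) (hz : z ∈ gph F)
    (L : Submodule ℝ (E2 n)) (hL : L ∈ SpStar F z) :
    ∀ w : E2 n, w ∈ L → mk2 (snd2 w) (-(fst2 w)) ∈ limN (gph F) z := by
  obtain ⟨L₀, hL₀, rfl⟩ := hL
  intro w hw
  obtain ⟨v, hv, rfl⟩ := hw
  have hvid : mk2 (snd2 ((Sneg n).toLinearMap v)) (-(fst2 ((Sneg n).toLinearMap v))) = v := by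
    simp only [Sneg, mk2, fst2, snd2, LinearEquiv.coe_coe, LinearEquiv.trans_apply,
      LinearEquiv.apply_symm_apply, LinearEquiv.prodComm_apply, LinearEquiv.prodCongr_apply,
      LinearEquiv.neg_apply, LinearEquiv.refl_apply, Prod.fst_swap, Prod.snd_swap, neg_neg]
    exact (lp2 n).symm_apply_apply v
  rw [hvid]
  obtain ⟨hfr, zk, Lk, hk, hzk, hdZ⟩ := hL₀
  refine ⟨zk, fun k => v - projC (Lk k) v, fun k => ⟨(hk k).1, ?_⟩, hzk, ?_⟩
  · intro t ht
    have htL : t ∈ Lk k := by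
      have := (hk k).2.2
      rw [← this] at ht; exact ht
    have hperp : v - ((Lk k).orthogonalProjectionOnto v : E2 n) ∈ (Lk k)ᗮ :=
      Submodule.sub_starProjection_mem_orthogonal v
    have : ⟪t, v - ((Lk k).orthogonalProjectionOnto v : E2 n)⟫_ℝ = 0 :=
      (Submodule.mem_orthogonal _ _).1 hperp t htL
    have h2 : ⟪v - projC (Lk k) v, t⟫_ℝ = 0 := by
      rw [real_inner_comm]
      simpa [projC] using this
    simp [h2]
  · have h0 : projC L₀ v = 0 := by
      simp [projC, Submodule.orthogonalProjectionOnto_apply_of_mem_orthogonal hv]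
    have hbnd : ∀ k, ‖projC (Lk k) v‖ ≤ dZ (Lk k) L₀ * ‖v‖ := by
      intro k
      have : projC (Lk k) v = (projC (Lk k) - projC L₀) v := by simp [h0]
      rw [this]
      exact (projC (Lk k) - projC L₀).le_opNorm v
    have hto : Tendsto (fun k => projC (Lk k) v) atTop (𝓝 0) := by
      rw [tendsto_zero_iff_norm_tendsto_zero]
      refine squeeze_zero (fun k => norm_nonneg _) hbnd ?_
      have := hdZ.mul_const ‖v‖
      simpa using this
    have : Tendsto (fun k => v - projC (Lk k) v) atTop (𝓝 (v - 0)) :=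
      (tendsto_const_nhds : Tendsto (fun _ : ℕ => v) atTop (𝓝 v)).sub hto
    simpa using this

end SCD
end
end

section
/- Let G : ℝ^n ⇒ ℝ^n, let Φ : ℝ^{2n} → ℝ^{2n}, and let F : ℝ^n ⇒ ℝ^n be the mapping defined by gph F = {(x, y) : Φ(x, y) ∈ gph G}. Let (x, y) ∈ gph F be such that Φ is continuously differentiable on a neighborhood of (x, y) and the Jacobian ∇Φ(x, y) is nonsingular. Then Sp F(x, y) = {∇Φ(x, y)^{-1} L : L ∈ Sp G(Φ(x, y))} and Sp* F(x, y) = {S_n ∇Φ(x, y)ᵀ S_nᵀ L : L ∈ Sp* G(Φ(x, y))}, where for a nonsingular (2n)×(2n) matrix M and L ∈ Z_n, ML := {Mz : z ∈ L}, and S_n denotes the (2n)×(2n) block matrix [[0, −I], [I, 0]]. -/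
open Filter Topology Metric Set
open scoped InnerProductSpace RealInnerProductSpace ENNReal NNReal

noncomputable section

namespace SCD

variable {n : ℕ}

/-! ### Helper lemmas -/

section Helpers

lemma tendsto_clm_apply' {Fk : ℕ → E2 n →L[ℝ] E2 n} {F : E2 n →L[ℝ] E2 n}
    {xk : ℕ → E2 n} {x : E2 n} (hF : Tendsto Fk atTop (𝓝 F)) (hx : Tendsto xk atTop (𝓝 x)) :
    Tendsto (fun k => Fk k (xk k)) atTop (𝓝 (F x)) := by
  have hc : Continuous fun p : (E2 n →L[ℝ] E2 n) × E2 n => p.1 p.2 :=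
    isBoundedBilinearMap_apply.continuous
  exact (hc.tendsto (F, x)).comp (hF.prodMk_nhds hx)

lemma projC_apply_mem (L : Submodule ℝ (E2 n)) (x : E2 n) : projC L x ∈ L :=
  (L.orthogonalProjectionOnto x).2

lemma projC_eq_self {L : Submodule ℝ (E2 n)} {x : E2 n} (hx : x ∈ L) : projC L x = x :=
  Submodule.starProjection_eq_self_iff.2 hx

lemma projC_eq_zero {L : Submodule ℝ (E2 n)} {x : E2 n} (hx : x ∈ Lᗮ) : projC L x = 0 := by
  have := Submodule.orthogonalProjectionOnto_apply_of_mem_orthogonal hx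
  simp [projC, this]

lemma norm_projC_apply_le (L : Submodule ℝ (E2 n)) (x : E2 n) : ‖projC L x‖ ≤ ‖x‖ := by
  have h1 : ‖projC L x‖ = ‖L.orthogonalProjectionOnto x‖ := rfl
  rw [h1]
  calc ‖L.orthogonalProjectionOnto x‖ ≤ ‖L.orthogonalProjectionOnto‖ * ‖x‖ :=
        (L.orthogonalProjectionOnto).le_opNorm x
    _ ≤ 1 * ‖x‖ := by
        have := Submodule.orthogonalProjectionOnto_norm_le (K := L)
        nlinarith [norm_nonneg x]
    _ = ‖x‖ := one_mul _

lemma projC_orthogonal (L : Submodule ℝ (E2 n)) (x : E2 n) :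
    projC Lᗮ x = x - projC L x := by
  have := Submodule.starProjection_orthogonal_val (K := L) x
  exact this

lemma dZ_orthogonal (L M : Submodule ℝ (E2 n)) : dZ Lᗮ Mᗮ = dZ L M := by
  unfold dZ
  have h : projC Lᗮ - projC Mᗮ = -(projC L - projC M) := by
    ext x
    simp [projC_orthogonal]
  rw [h, norm_neg]

end Helpers
section Crit

/-- From projection convergence, approximate elements of the limit by elements of `Lk`. -/
lemma approx_of_dZ {Lk : ℕ → Submodule ℝ (E2 n)} {L : Submodule ℝ (E2 n)}
    (hd : Tendsto (fun k => dZ (Lk k) L) atTop (𝓝 0)) {w : E2 n} (hw : w ∈ L) :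
    ∃ wk : ℕ → E2 n, (∀ k, wk k ∈ Lk k) ∧ Tendsto wk atTop (𝓝 w) := by
  refine ⟨fun k => projC (Lk k) w, fun k => projC_apply_mem _ _, ?_⟩
  rw [tendsto_iff_norm_sub_tendsto_zero]
  have hb : ∀ k, ‖projC (Lk k) w - w‖ ≤ dZ (Lk k) L * ‖w‖ := by
    intro k
    have : projC (Lk k) w - w = (projC (Lk k) - projC L) w := by
      simp [projC_eq_self hw]
    rw [this]
    exact (projC (Lk k) - projC L).le_opNorm w
  have h0 : Tendsto (fun k => dZ (Lk k) L * ‖w‖) atTop (𝓝 0) := by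
    simpa using hd.mul_const ‖w‖
  exact squeeze_zero (fun k => norm_nonneg _) hb h0

/-- Pointwise convergence of projections from two-sided approximation. -/
lemma tendsto_projC_apply {Lk : ℕ → Submodule ℝ (E2 n)} {L : Submodule ℝ (E2 n)}
    (h1 : ∀ w ∈ L, ∃ wk : ℕ → E2 n, (∀ k, wk k ∈ Lk k) ∧ Tendsto wk atTop (𝓝 w))
    (h2 : ∀ w ∈ Lᗮ, ∃ wk : ℕ → E2 n, (∀ k, wk k ∈ (Lk k)ᗮ) ∧ Tendsto wk atTop (𝓝 w))
    (x : E2 n) :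
    Tendsto (fun k => projC (Lk k) x) atTop (𝓝 (projC L x)) := by
  set u := projC L x with hu
  have hum : u ∈ L := projC_apply_mem _ _
  have hvm : x - u ∈ Lᗮ := L.sub_starProjection_mem_orthogonal x
  obtain ⟨wk, hwk, hwt⟩ := h1 u hum
  obtain ⟨vk, hvk, hvt⟩ := h2 (x - u) hvm
  have key1 : Tendsto (fun k => projC (Lk k) u) atTop (𝓝 u) := by
    rw [tendsto_iff_norm_sub_tendsto_zero]
    have hb : ∀ k, ‖projC (Lk k) u - u‖ ≤ 2 * ‖wk k - u‖ := by
      intro k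
      have e1 : projC (Lk k) u - u = projC (Lk k) (u - wk k) + (wk k - u) := by
        have : projC (Lk k) (wk k) = wk k := projC_eq_self (hwk k)
        rw [map_sub, this]; abel
      rw [e1]
      calc ‖projC (Lk k) (u - wk k) + (wk k - u)‖
          ≤ ‖projC (Lk k) (u - wk k)‖ + ‖wk k - u‖ := norm_add_le _ _
        _ ≤ ‖u - wk k‖ + ‖wk k - u‖ := by
            gcongr; exact norm_projC_apply_le _ _
        _ = 2 * ‖wk k - u‖ := by rw [norm_sub_rev]; ring
    have h0 : Tendsto (fun k => 2 * ‖wk k - u‖) atTop (𝓝 0) := by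
      have := (tendsto_iff_norm_sub_tendsto_zero.1 hwt).const_mul 2
      simpa using this
    exact squeeze_zero (fun k => norm_nonneg _) hb h0
  have key2 : Tendsto (fun k => projC (Lk k) (x - u)) atTop (𝓝 0) := by
    rw [tendsto_iff_norm_sub_tendsto_zero]
    have hb : ∀ k, ‖projC (Lk k) (x - u) - 0‖ ≤ ‖(x - u) - vk k‖ := by
      intro k
      have e1 : projC (Lk k) (x - u) = projC (Lk k) ((x - u) - vk k) := by
        conv_rhs => rw [map_sub]
        rw [projC_eq_zero (hvk k), sub_zero]
      rw [sub_zero, e1]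
      exact norm_projC_apply_le _ _
    have h0 : Tendsto (fun k => ‖(x - u) - vk k‖) atTop (𝓝 0) := by
      have := tendsto_iff_norm_sub_tendsto_zero.1 hvt
      simpa [norm_sub_rev] using this
    exact squeeze_zero (fun k => norm_nonneg _) hb h0
  have : Tendsto (fun k => projC (Lk k) u + projC (Lk k) (x - u)) atTop (𝓝 (u + 0)) :=
    key1.add key2
  have heq : ∀ k, projC (Lk k) u + projC (Lk k) (x - u) = projC (Lk k) x := by
    intro k; rw [← map_add]; congr 1; abel
  simpa [heq, hu] using this

/-- Operator-norm convergence of projections from two-sided approximation. -/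
lemma dZ_tendsto_of_approx {Lk : ℕ → Submodule ℝ (E2 n)} {L : Submodule ℝ (E2 n)}
    (h1 : ∀ w ∈ L, ∃ wk : ℕ → E2 n, (∀ k, wk k ∈ Lk k) ∧ Tendsto wk atTop (𝓝 w))
    (h2 : ∀ w ∈ Lᗮ, ∃ wk : ℕ → E2 n, (∀ k, wk k ∈ (Lk k)ᗮ) ∧ Tendsto wk atTop (𝓝 w)) :
    Tendsto (fun k => dZ (Lk k) L) atTop (𝓝 0) := by
  set b := stdOrthonormalBasis ℝ (E2 n) with hb
  have hpt := tendsto_projC_apply h1 h2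
  have hb0 : ∀ k, dZ (Lk k) L ≤ ∑ i, ‖(projC (Lk k) - projC L) (b i)‖ := by
    intro k
    refine ContinuousLinearMap.opNorm_le_bound _ (Finset.sum_nonneg fun i _ => norm_nonneg _) ?_
    intro x
    have hx : x = ∑ i, ⟪b i, x⟫_ℝ • b i := (b.sum_repr' x).symm
    calc ‖(projC (Lk k) - projC L) x‖
        = ‖∑ i, ⟪b i, x⟫_ℝ • (projC (Lk k) - projC L) (b i)‖ := by
          conv_lhs => rw [hx]
          rw [map_sum]
          congr 1
          exact Finset.sum_congr rfl fun i _ => by rw [map_smul]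
      _ ≤ ∑ i, ‖⟪b i, x⟫_ℝ • (projC (Lk k) - projC L) (b i)‖ := norm_sum_le _ _
      _ ≤ ∑ i, ‖(projC (Lk k) - projC L) (b i)‖ * ‖x‖ := by
          refine Finset.sum_le_sum fun i _ => ?_
          rw [norm_smul]
          have : ‖⟪b i, x⟫_ℝ‖ ≤ ‖x‖ := by
            have := abs_real_inner_le_norm (b i) x
            simpa [b.orthonormal.1 i] using this
          calc ‖⟪b i, x⟫_ℝ‖ * ‖(projC (Lk k) - projC L) (b i)‖
              ≤ ‖x‖ * ‖(projC (Lk k) - projC L) (b i)‖ := by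
                gcongr
            _ = ‖(projC (Lk k) - projC L) (b i)‖ * ‖x‖ := mul_comm _ _
      _ = (∑ i, ‖(projC (Lk k) - projC L) (b i)‖) * ‖x‖ := (Finset.sum_mul _ _ _).symm
  have hsum : Tendsto (fun k => ∑ i, ‖(projC (Lk k) - projC L) (b i)‖) atTop (𝓝 0) := by
    have : Tendsto (fun k => ∑ i, ‖(projC (Lk k) - projC L) (b i)‖) atTop
        (𝓝 (∑ i : Fin (Module.finrank ℝ (E2 n)), (0:ℝ))) := by
      refine tendsto_finset_sum _ fun i _ => ?_
      have := (hpt (b i)).sub_const (projC L (b i))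
      have h2' : Tendsto (fun k => (projC (Lk k) - projC L) (b i)) atTop (𝓝 0) := by
        simpa using this
      simpa using h2'.norm
    simpa using this
  exact squeeze_zero (fun k => norm_nonneg _) hb0 hsum

end Crit
section MapLemmas

lemma clm_coe_eq (e : E2 n ≃L[ℝ] E2 n) :
    ((e : E2 n →L[ℝ] E2 n) : E2 n →ₗ[ℝ] E2 n) = (e.toLinearEquiv : E2 n →ₗ[ℝ] E2 n) := rfl

lemma adjoint_symm_apply_adjoint (e : E2 n ≃L[ℝ] E2 n) (x : E2 n) :
    ContinuousLinearMap.adjoint ((e.symm : E2 n →L[ℝ] E2 n))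
      (ContinuousLinearMap.adjoint ((e : E2 n →L[ℝ] E2 n)) x) = x := by
  rw [← ContinuousLinearMap.comp_apply, ← ContinuousLinearMap.adjoint_comp]
  have h : (e : E2 n →L[ℝ] E2 n) ∘L (e.symm : E2 n →L[ℝ] E2 n) = ContinuousLinearMap.id ℝ (E2 n) := by
    ext x; simp
  rw [h, ContinuousLinearMap.adjoint_id, ContinuousLinearMap.id_apply]

lemma orthogonal_map_equiv (e : E2 n ≃L[ℝ] E2 n) (L : Submodule ℝ (E2 n)) :
    (L.map ((e : E2 n →L[ℝ] E2 n) : E2 n →ₗ[ℝ] E2 n))ᗮ =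
      Lᗮ.map ((ContinuousLinearMap.adjoint ((e.symm : E2 n →L[ℝ] E2 n))) : E2 n →ₗ[ℝ] E2 n) := by
  ext x
  constructor
  · intro hx
    refine Submodule.mem_map.2 ⟨ContinuousLinearMap.adjoint ((e : E2 n →L[ℝ] E2 n)) x, ?_, ?_⟩
    · rw [Submodule.mem_orthogonal]
      intro u hu
      rw [ContinuousLinearMap.adjoint_inner_right]
      exact (Submodule.mem_orthogonal _ _).1 hx _ (Submodule.mem_map_of_mem hu)
    · exact adjoint_symm_apply_adjoint e x
  · intro hx
    obtain ⟨u, hu, rfl⟩ := Submodule.mem_map.1 hx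
    rw [Submodule.mem_orthogonal]
    rintro w hw
    obtain ⟨v, hv, rfl⟩ := Submodule.mem_map.1 hw
    show ⟪e v, ContinuousLinearMap.adjoint ((e.symm : E2 n →L[ℝ] E2 n)) u⟫_ℝ = 0
    rw [ContinuousLinearMap.adjoint_inner_right]
    have : (e.symm : E2 n →L[ℝ] E2 n) (e v) = v := by simp
    rw [this]
    exact (Submodule.mem_orthogonal _ _).1 hu _ hv

lemma finrank_map_clm_equiv (e : E2 n ≃L[ℝ] E2 n) (L : Submodule ℝ (E2 n)) :
    Module.finrank ℝ (L.map ((e : E2 n →L[ℝ] E2 n) : E2 n →ₗ[ℝ] E2 n)) = Module.finrank ℝ L := by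
  rw [clm_coe_eq]
  exact LinearEquiv.finrank_map_eq e.toLinearEquiv L

lemma adjoint_continuous :
    Continuous (fun A : E2 n →L[ℝ] E2 n => ContinuousLinearMap.adjoint A) :=
  (ContinuousLinearMap.adjoint (E := E2 n) (F := E2 n) (𝕜 := ℝ)).continuous

lemma dZ_map_tendsto {Bk : ℕ → (E2 n ≃L[ℝ] E2 n)} {B : E2 n ≃L[ℝ] E2 n}
    {Lk : ℕ → Submodule ℝ (E2 n)} {L : Submodule ℝ (E2 n)}
    (hB : Tendsto (fun k => ((Bk k : E2 n →L[ℝ] E2 n))) atTop (𝓝 (B : E2 n →L[ℝ] E2 n)))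
    (hBs : Tendsto (fun k => (((Bk k).symm : E2 n →L[ℝ] E2 n))) atTop
      (𝓝 ((B.symm : E2 n →L[ℝ] E2 n))))
    (hd : Tendsto (fun k => dZ (Lk k) L) atTop (𝓝 0)) :
    Tendsto (fun k => dZ ((Lk k).map (((Bk k : E2 n →L[ℝ] E2 n)) : E2 n →ₗ[ℝ] E2 n))
      (L.map (((B : E2 n →L[ℝ] E2 n)) : E2 n →ₗ[ℝ] E2 n))) atTop (𝓝 0) := by
  apply dZ_tendsto_of_approx
  · intro w hw
    obtain ⟨v, hv, rfl⟩ := Submodule.mem_map.1 hw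
    obtain ⟨vk, hvk, hvt⟩ := approx_of_dZ hd hv
    exact ⟨fun k => Bk k (vk k), fun k => Submodule.mem_map_of_mem (hvk k),
      tendsto_clm_apply' hB hvt⟩
  · intro w hw
    rw [orthogonal_map_equiv] at hw
    obtain ⟨u, hu, rfl⟩ := Submodule.mem_map.1 hw
    have hd' : Tendsto (fun k => dZ ((Lk k)ᗮ) Lᗮ) atTop (𝓝 0) := by
      simpa [dZ_orthogonal] using hd
    obtain ⟨uk, huk, hut⟩ := approx_of_dZ hd' hu
    refine ⟨fun k => ContinuousLinearMap.adjoint (((Bk k).symm : E2 n →L[ℝ] E2 n)) (uk k),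
      fun k => ?_, ?_⟩
    · rw [orthogonal_map_equiv]
      exact Submodule.mem_map_of_mem (huk k)
    · have hadj : Tendsto (fun k => ContinuousLinearMap.adjoint (((Bk k).symm : E2 n →L[ℝ] E2 n)))
        atTop (𝓝 (ContinuousLinearMap.adjoint ((B.symm : E2 n →L[ℝ] E2 n)))) :=
        (adjoint_continuous.tendsto _).comp hBs
      exact tendsto_clm_apply' hadj hut

end MapLemmas
section TconeLemmas

lemma tcone_of_eventually {A : Set (E2 n)} {z w : E2 n} {t : ℕ → ℝ} {wk : ℕ → E2 n}
    (ht : ∀ k, 0 < t k) (ht0 : Tendsto t atTop (𝓝 0)) (hw : Tendsto wk atTop (𝓝 w))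
    (hmem : ∀ᶠ k in atTop, z + t k • wk k ∈ A) : w ∈ tcone A z := by
  obtain ⟨N, hN⟩ := eventually_atTop.1 hmem
  exact ⟨fun k => t (k + N), fun k => wk (k + N), fun k => ht _,
    ht0.comp (tendsto_add_atTop_nat N), hw.comp (tendsto_add_atTop_nat N),
    fun k => hN _ (Nat.le_add_left N k)⟩

lemma tendsto_diffquot {f : E2 n → E2 n} {p : E2 n} {Bf : E2 n →L[ℝ] E2 n}
    (hf : HasFDerivAt f Bf p) {t : ℕ → ℝ} {v : ℕ → E2 n} {v₀ : E2 n}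
    (ht : ∀ k, 0 < t k) (ht0 : Tendsto t atTop (𝓝 0)) (hv : Tendsto v atTop (𝓝 v₀)) :
    Tendsto (fun k => (t k)⁻¹ • (f (p + t k • v k) - f p)) atTop (𝓝 (Bf v₀)) := by
  have hlo : (fun h : E2 n => f (p + h) - f p - Bf h) =o[𝓝 0] fun h => h :=
    hasFDerivAt_iff_isLittleO_nhds_zero.1 hf
  set hk : ℕ → E2 n := fun k => t k • v k with hhk
  have hk0 : Tendsto hk atTop (𝓝 0) := by
    have := ht0.smul hv; simpa using this
  have h1 : (fun k => f (p + hk k) - f p - Bf (hk k)) =o[atTop] hk := hlo.comp_tendsto hk0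
  have h2 : hk =O[atTop] t := by
    rw [Asymptotics.isBigO_iff]
    refine ⟨‖v₀‖ + 1, ?_⟩
    have hev : ∀ᶠ k in atTop, ‖v k‖ < ‖v₀‖ + 1 :=
      (hv.norm).eventually_lt_const (lt_add_one _)
    filter_upwards [hev] with k hk'
    have : ‖hk k‖ = t k * ‖v k‖ := by
      rw [hhk]; simp [norm_smul, abs_of_pos (ht k)]
    rw [this, Real.norm_eq_abs, abs_of_pos (ht k)]
    nlinarith [(ht k).le, norm_nonneg (v k)]
  have h3 : (fun k => f (p + hk k) - f p - Bf (hk k)) =o[atTop] t := h1.trans_isBigO h2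
  have h4 : Tendsto (fun k => (t k)⁻¹ • (f (p + hk k) - f p - Bf (hk k))) atTop (𝓝 0) :=
    h3.tendsto_inv_smul_nhds_zero
  have h6 : Tendsto (fun k => (t k)⁻¹ • (f (p + hk k) - f p - Bf (hk k)) + Bf (v k)) atTop
      (𝓝 (0 + Bf v₀)) := h4.add ((Bf.continuous.tendsto _).comp hv)
  rw [zero_add] at h6
  refine h6.congr fun k => ?_
  have hB : (t k)⁻¹ • Bf (hk k) = Bf (v k) := by
    rw [hhk]
    simp only [map_smul, smul_smul, inv_mul_cancel₀ (ht k).ne', one_smul]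
  rw [smul_sub, hB, sub_add_cancel]

lemma tcone_preimage {Φ : E2 n → E2 n} {z' : E2 n} {e : E2 n ≃L[ℝ] E2 n}
    (hΦ : HasStrictFDerivAt Φ (e : E2 n →L[ℝ] E2 n) z') (A : Set (E2 n)) :
    tcone {p | Φ p ∈ A} z' = (⇑e) ⁻¹' (tcone A (Φ z')) := by
  ext w
  constructor
  · rintro ⟨t, wk, ht, ht0, hwt, hmem⟩
    show e w ∈ tcone A (Φ z')
    refine ⟨t, fun k => (t k)⁻¹ • (Φ (z' + t k • wk k) - Φ z'), ht, ht0,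
      tendsto_diffquot hΦ.hasFDerivAt ht ht0 hwt, fun k => ?_⟩
    have hx : Φ z' + t k • ((t k)⁻¹ • (Φ (z' + t k • wk k) - Φ z')) = Φ (z' + t k • wk k) := by
      rw [smul_smul, mul_inv_cancel₀ (ht k).ne', one_smul, add_sub_cancel]
    rw [hx]; exact hmem k
  · intro hw
    obtain ⟨t, vk, ht, ht0, hvt, hmem⟩ := (hw : e w ∈ tcone A (Φ z'))
    set Ψ := hΦ.localInverse Φ e z' with hΨ
    have hΨd : HasStrictFDerivAt Ψ ((e.symm : E2 n →L[ℝ] E2 n)) (Φ z') := hΦ.to_localInverse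
    have hq : Tendsto (fun k => Φ z' + t k • vk k) atTop (𝓝 (Φ z')) := by
      have h0 : Tendsto (fun k => t k • vk k) atTop (𝓝 0) := by
        have := ht0.smul hvt; simpa using this
      simpa using tendsto_const_nhds.add h0
    have hri : ∀ᶠ k in atTop, Φ (Ψ (Φ z' + t k • vk k)) = Φ z' + t k • vk k :=
      hq.eventually hΦ.eventually_right_inverse
    have hΨz : Ψ (Φ z') = z' := hΦ.localInverse_apply_image
    have hwt : Tendsto (fun k => (t k)⁻¹ • (Ψ (Φ z' + t k • vk k) - z')) atTop (𝓝 w) := by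
      have h5 := tendsto_diffquot hΨd.hasFDerivAt ht ht0 hvt
      simp only [hΨz, ContinuousLinearEquiv.symm_apply_apply] at h5
      convert h5 using 2 <;> simp [hΨz]
    refine tcone_of_eventually ht ht0 hwt ?_
    filter_upwards [hri] with k hk'
    have hx : z' + t k • ((t k)⁻¹ • (Ψ (Φ z' + t k • vk k) - z')) = Ψ (Φ z' + t k • vk k) := by
      rw [smul_smul, mul_inv_cancel₀ (ht k).ne', one_smul, add_sub_cancel]
    show Φ _ ∈ A
    rw [hx, hk']
    exact hmem k

end TconeLemmas
section EquivLemmas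

lemma isUnit_clm_equiv {B : E2 n →L[ℝ] E2 n} (h : IsUnit B) :
    ∃ e : E2 n ≃L[ℝ] E2 n, (e : E2 n →L[ℝ] E2 n) = B ∧
      ((e.symm : E2 n →L[ℝ] E2 n)) = Ring.inverse B := by
  obtain ⟨u, rfl⟩ := h
  refine ⟨ContinuousLinearEquiv.ofUnit u, by ext x; rfl, ?_⟩
  rw [Ring.inverse_unit]; ext x; rfl

lemma comap_clm_equiv (e : E2 n ≃L[ℝ] E2 n) (M : Submodule ℝ (E2 n)) :
    M.comap ((e : E2 n →L[ℝ] E2 n) : E2 n →ₗ[ℝ] E2 n) =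
      M.map (((e.symm : E2 n →L[ℝ] E2 n)) : E2 n →ₗ[ℝ] E2 n) := by
  ext x
  simp only [Submodule.mem_comap, Submodule.mem_map]
  constructor
  · intro hx
    exact ⟨e x, hx, by simp⟩
  · rintro ⟨y, hy, rfl⟩
    simpa using hy

lemma adjS_comap (e : E2 n ≃L[ℝ] E2 n) (M : Submodule ℝ (E2 n)) :
    adjS (M.comap ((e : E2 n →L[ℝ] E2 n) : E2 n →ₗ[ℝ] E2 n)) =
      (adjS M).map ((Sneg n).toLinearMap ∘ₗ
        (ContinuousLinearMap.adjoint ((e : E2 n →L[ℝ] E2 n))).toLinearMap ∘ₗ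
        (Sneg n).symm.toLinearMap) := by
  unfold adjS
  rw [comap_clm_equiv, orthogonal_map_equiv e.symm]
  simp only [ContinuousLinearEquiv.symm_symm]
  rw [← Submodule.map_comp, ← Submodule.map_comp]
  congr 1
  ext x
  simp

end EquivLemmas

lemma comap_clm_equiv' {A : E2 n →L[ℝ] E2 n} {e : E2 n ≃L[ℝ] E2 n}
    (he : (e : E2 n →L[ℝ] E2 n) = A) (M : Submodule ℝ (E2 n)) :
    M.comap (A : E2 n →ₗ[ℝ] E2 n) =
      M.map (((e.symm : E2 n →L[ℝ] E2 n)) : E2 n →ₗ[ℝ] E2 n) := by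
  rw [← he]; exact comap_clm_equiv e M
/- STATEMENT 8 -/
theorem stmt8 (n : ℕ) (G F : E n → Set (E n)) (Φ : E2 n → E2 n)
    (hgraph : gph F = {z | Φ z ∈ gph G}) (z : E2 n) (hz : z ∈ gph F)
    (hC1 : ∃ W : Set (E2 n), IsOpen W ∧ z ∈ W ∧ ContDiffOn ℝ 1 Φ W)
    (hinv : Function.Bijective (fderiv ℝ Φ z)) :
    Sp F z = {L' | ∃ L ∈ Sp G (Φ z),
        L' = Submodule.comap ((fderiv ℝ Φ z) : E2 n →ₗ[ℝ] E2 n) L} ∧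
    SpStar F z = {L' | ∃ L ∈ SpStar G (Φ z),
        L' = Submodule.map ((Sneg n).toLinearMap ∘ₗ
          (ContinuousLinearMap.adjoint (fderiv ℝ Φ z)).toLinearMap ∘ₗ
          (Sneg n).symm.toLinearMap) L} := by
  obtain ⟨W, hWo, hzW, hWc⟩ := hC1
  haveI : ContinuousSMul ℝ (E2 n) := inferInstance
  have hu : IsUnit (fderiv ℝ Φ z) :=
    ⟨(LinearEquiv.ofBijective ((fderiv ℝ Φ z) : E2 n →ₗ[ℝ] E2 n)
      hinv).toContinuousLinearEquiv.toUnit, by ext x; rfl⟩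
  obtain ⟨e, he, hes⟩ := isUnit_clm_equiv hu
  have hdf : ContinuousOn (fderiv ℝ Φ) W := hWc.continuousOn_fderiv_of_isOpen hWo (le_refl 1)
  set W' : Set (E2 n) := W ∩ (fderiv ℝ Φ) ⁻¹' {B | IsUnit B} with hW'
  have hW'o : IsOpen W' := hdf.isOpen_inter_preimage hWo Units.isOpen
  have hzW' : z ∈ W' := ⟨hzW, hu⟩
  have hstrictAt : ∀ z' ∈ W, HasStrictFDerivAt Φ (fderiv ℝ Φ z') z' := fun z' h =>
    (hWc.contDiffAt (hWo.mem_nhds h)).hasStrictFDerivAt one_ne_zero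
  have hTC : ∀ z' ∈ W', tcone (gph F) z' = ⇑(fderiv ℝ Φ z') ⁻¹' tcone (gph G) (Φ z') := by
    intro z' hz'
    obtain ⟨e', he', -⟩ := isUnit_clm_equiv hz'.2
    have hst : HasStrictFDerivAt Φ ((e' : E2 n →L[ℝ] E2 n)) z' := by
      rw [he']; exact hstrictAt z' hz'.1
    have hpre := tcone_preimage hst (gph G)
    have hfe : ⇑(fderiv ℝ Φ z') = ⇑e' := by rw [← he']; rfl
    rw [hgraph, hfe]
    exact hpre
  have hΦc : ContinuousAt Φ z := (hWc.contDiffAt (hWo.mem_nhds hzW)).continuousAt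
  have hinvc : ContinuousAt (Ring.inverse : (E2 n →L[ℝ] E2 n) → (E2 n →L[ℝ] E2 n))
      (fderiv ℝ Φ z) := by
    have := NormedRing.inverse_continuousAt hu.unit
    rwa [IsUnit.unit_spec] at this
  have h1 : Sp F z = {L' | ∃ L ∈ Sp G (Φ z),
      L' = Submodule.comap ((fderiv ℝ Φ z) : E2 n →ₗ[ℝ] E2 n) L} := by
    ext L
    constructor
    · rintro ⟨hrk, zk0, Lk0, hcond0, hzt0, hdt0⟩
      have hev : ∀ᶠ k in atTop, zk0 k ∈ W' := hzt0 (hW'o.mem_nhds hzW')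
      obtain ⟨N, hN⟩ := eventually_atTop.1 hev
      set zk : ℕ → E2 n := fun k => zk0 (k + N) with hzk
      set Lk : ℕ → Submodule ℝ (E2 n) := fun k => Lk0 (k + N) with hLk
      have hcond : ∀ k, zk k ∈ gph F ∧ Module.finrank ℝ (Lk k) = n ∧
          ((Lk k : Set (E2 n)) = tcone (gph F) (zk k)) := fun k => hcond0 (k + N)
      have hzt : Tendsto zk atTop (𝓝 z) := hzt0.comp (tendsto_add_atTop_nat N)
      have hdt : Tendsto (fun k => dZ (Lk k) L) atTop (𝓝 0) := hdt0.comp (tendsto_add_atTop_nat N)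
      have hWk : ∀ k, zk k ∈ W' := fun k => hN _ (Nat.le_add_left N k)
      choose ek hek heks using fun k => isUnit_clm_equiv (hWk k).2
      have hft : Tendsto (fun k => fderiv ℝ Φ (zk k)) atTop (𝓝 (fderiv ℝ Φ z)) :=
        ((hdf.continuousAt (hWo.mem_nhds hzW)).tendsto).comp hzt
      refine ⟨L.map (((e : E2 n →L[ℝ] E2 n)) : E2 n →ₗ[ℝ] E2 n), ?_, ?_⟩
      · refine ⟨by rw [finrank_map_clm_equiv]; exact hrk, fun k => Φ (zk k),
          fun k => (Lk k).map (((ek k : E2 n →L[ℝ] E2 n)) : E2 n →ₗ[ℝ] E2 n), fun k => ?_, ?_, ?_⟩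
        · refine ⟨?_, ?_, ?_⟩
          · have h' := (hcond k).1; rw [hgraph] at h'; exact h'
          · rw [finrank_map_clm_equiv]; exact (hcond k).2.1
          · have hset : ((Lk k : Set (E2 n))) = ⇑(ek k) ⁻¹' tcone (gph G) (Φ (zk k)) := by
              rw [(hcond k).2.2, hTC _ (hWk k)]
              have : ⇑(fderiv ℝ Φ (zk k)) = ⇑(ek k) := by rw [← hek k]; rfl
              rw [this]
            have hmapset : (((Lk k).map (((ek k : E2 n →L[ℝ] E2 n)) : E2 n →ₗ[ℝ] E2 n)) :
                Set (E2 n)) = ⇑(ek k) '' (Lk k) := by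
              rw [Submodule.map_coe]; rfl
            rw [hmapset, hset, Set.image_preimage_eq _ (ek k).surjective]
        · exact hΦc.tendsto.comp hzt
        · have hB : Tendsto (fun k => ((ek k : E2 n →L[ℝ] E2 n))) atTop
              (𝓝 ((e : E2 n →L[ℝ] E2 n))) := by
            simp only [hek, he]
            exact hft
          have hBs : Tendsto (fun k => (((ek k).symm : E2 n →L[ℝ] E2 n))) atTop
              (𝓝 ((e.symm : E2 n →L[ℝ] E2 n))) := by
            simp only [heks, hes]
            exact hinvc.tendsto.comp hft
          exact dZ_map_tendsto hB hBs hdt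
      · have hcoe : (((e : E2 n →L[ℝ] E2 n)) : E2 n →ₗ[ℝ] E2 n) =
            ((fderiv ℝ Φ z : E2 n →L[ℝ] E2 n) : E2 n →ₗ[ℝ] E2 n) := by rw [he]
        rw [hcoe, Submodule.comap_map_eq_of_injective (f := ((fderiv ℝ Φ z : E2 n →L[ℝ] E2 n) : E2 n →ₗ[ℝ] E2 n)) hinv.injective L]
    · rintro ⟨M, hM, rfl⟩
      obtain ⟨hrkM, qk0, Mk0, hcondG0, hqt0, hdM0⟩ := hM
      have hstrict : HasStrictFDerivAt Φ ((e : E2 n →L[ℝ] E2 n)) z := by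
        rw [he]; exact hstrictAt z hzW
      set Ψ := hstrict.localInverse Φ e z with hΨ
      have hΨz : Ψ (Φ z) = z := hstrict.localInverse_apply_image
      have hzt0 : Tendsto (fun k => Ψ (qk0 k)) atTop (𝓝 z) := by
        have h : Tendsto (fun k => Ψ (qk0 k)) atTop (𝓝 (Ψ (Φ z))) :=
          (hstrict.localInverse_continuousAt).tendsto.comp hqt0
        rwa [hΨz] at h
      have hev1 : ∀ᶠ k in atTop, Ψ (qk0 k) ∈ W' := hzt0 (hW'o.mem_nhds hzW')
      have hev2 : ∀ᶠ k in atTop, Φ (Ψ (qk0 k)) = qk0 k :=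
        hqt0.eventually hstrict.eventually_right_inverse
      have hev : ∀ᶠ k in atTop, Ψ (qk0 k) ∈ W' ∧ Φ (Ψ (qk0 k)) = qk0 k := hev1.and hev2
      obtain ⟨N, hN⟩ := eventually_atTop.1 hev
      set qk : ℕ → E2 n := fun k => qk0 (k + N) with hqk
      set Mk : ℕ → Submodule ℝ (E2 n) := fun k => Mk0 (k + N) with hMk
      set zk : ℕ → E2 n := fun k => Ψ (qk0 (k + N)) with hzk
      have hWk : ∀ k, zk k ∈ W' := fun k => (hN _ (Nat.le_add_left N k)).1
      have hΦzk : ∀ k, Φ (zk k) = qk k := fun k => (hN _ (Nat.le_add_left N k)).2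
      have hcondG : ∀ k, qk k ∈ gph G ∧ Module.finrank ℝ (Mk k) = n ∧
          ((Mk k : Set (E2 n)) = tcone (gph G) (qk k)) := fun k => hcondG0 (k + N)
      have hzt : Tendsto zk atTop (𝓝 z) := hzt0.comp (tendsto_add_atTop_nat N)
      have hqt : Tendsto qk atTop (𝓝 (Φ z)) := hqt0.comp (tendsto_add_atTop_nat N)
      have hdM : Tendsto (fun k => dZ (Mk k) M) atTop (𝓝 0) := hdM0.comp (tendsto_add_atTop_nat N)
      choose ek hek heks using fun k => isUnit_clm_equiv (hWk k).2
      have hft : Tendsto (fun k => fderiv ℝ Φ (zk k)) atTop (𝓝 (fderiv ℝ Φ z)) :=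
        ((hdf.continuousAt (hWo.mem_nhds hzW)).tendsto).comp hzt
      refine ⟨by rw [comap_clm_equiv' he, finrank_map_clm_equiv]; exact hrkM,
        zk, fun k => (Mk k).map ((((ek k).symm : E2 n →L[ℝ] E2 n)) : E2 n →ₗ[ℝ] E2 n),
        fun k => ?_, hzt, ?_⟩
      · refine ⟨?_, ?_, ?_⟩
        · rw [hgraph]
          show Φ (zk k) ∈ gph G
          rw [hΦzk k]; exact (hcondG k).1
        · rw [finrank_map_clm_equiv]; exact (hcondG k).2.1
        · have h2 : tcone (gph F) (zk k) = ⇑(fderiv ℝ Φ (zk k)) ⁻¹' tcone (gph G) (Φ (zk k)) :=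
            hTC _ (hWk k)
          have hfe : ⇑(fderiv ℝ Φ (zk k)) = ⇑(ek k) := by rw [← hek k]; rfl
          have hmapset : (((Mk k).map ((((ek k).symm : E2 n →L[ℝ] E2 n)) : E2 n →ₗ[ℝ] E2 n)) :
              Set (E2 n)) = ⇑((ek k).symm) '' (Mk k) := by
            rw [Submodule.map_coe]; rfl
          rw [hmapset, h2, hfe, hΦzk k, ← (hcondG k).2.2]
          ext x
          constructor
          · rintro ⟨y, hy, rfl⟩
            simpa using hy
          · intro hx
            exact ⟨ek k x, hx, by simp⟩
      · have hB : Tendsto (fun k => (((ek k).symm : E2 n →L[ℝ] E2 n))) atTop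
            (𝓝 ((e.symm : E2 n →L[ℝ] E2 n))) := by
          simp only [heks, hes]
          exact hinvc.tendsto.comp hft
        have hBs : Tendsto (fun k => ((((ek k).symm.symm : E2 n →L[ℝ] E2 n))) ) atTop
            (𝓝 ((e.symm.symm : E2 n →L[ℝ] E2 n))) := by
          simp only [ContinuousLinearEquiv.symm_symm, hek, he]
          exact hft
        have := dZ_map_tendsto (Bk := fun k => (ek k).symm) (B := e.symm) hB hBs hdM
        rwa [comap_clm_equiv' he]
  refine ⟨h1, ?_⟩
  ext L'
  simp only [SpStar, Set.mem_setOf_eq]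
  rw [h1]
  constructor
  · rintro ⟨X, hX, rfl⟩
    obtain ⟨M, hM, rfl⟩ := hX
    refine ⟨adjS M, ⟨M, hM, rfl⟩, ?_⟩
    rw [← he, adjS_comap]
  · rintro ⟨M', ⟨M, hM, rfl⟩, rfl⟩
    refine ⟨Submodule.comap ((fderiv ℝ Φ z) : E2 n →ₗ[ℝ] E2 n) M, ⟨M, hM, rfl⟩, ?_⟩
    rw [← he, adjS_comap]

end SCD
end
end
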